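/- In CCTL*, every formula is equivalent to a formula in simple form, where a state formula is in simple form if every occurrence of the path quantifier E is immediately preceded by the counting operator D^1 (i.e., state formulas are generated by φ ::= ⊤ | p | ¬φ | φ∧φ | D^1 E ψ | D^n φ). In particular, for path formulas ψ₁, ψ₂ and a propositional formula χ, the following equivalence holds over all Kripke trees: E(⋀_{j=1}^m D^{m_j}φ_j ∧ ⋀_{j=1}^n ¬D^{n_j}θ_j ∧ ⋀_{j=1}^p X ξ_j ∧ χ) is equivalent to ⋀_{j=1}^m D^{m_j}φ_j ∧ ⋀_{j=1}^n ¬D^{n_j}θ_j ∧ D^1 E(⋀_{j=1}^p ξ_j) ∧ χ. -/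

import Mathlib

mutual
/-- State formulas of Counting-CTL* (CCTL*). -/
inductive SForm (AP : Type) : Type where
  | top : SForm AP
  | atom : AP → SForm AP
  | not : SForm AP → SForm AP
  | and : SForm AP → SForm AP → SForm AP
  | ex : PForm AP → SForm AP
  | cnt : ℕ → SForm AP → SForm AP
/-- Path formulas of Counting-CTL* (CCTL*). -/
inductive PForm (AP : Type) : Type where
  | state : SForm AP → PForm AP
  | not : PForm AP → PForm AP
  | and : PForm AP → PForm AP → PForm AP
  | next : PForm AP → PForm AP
  | until_ : PForm AP → PForm AP → PForm AP
end

/-- `T` is a tree: nonempty and prefix-closed. -/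
def IsTree {D : Type} (T : Set (List D)) : Prop :=
  [] ∈ T ∧ ∀ (w : List D) (d : D), w ++ [d] ∈ T → w ∈ T

/-- Every node of `T` has a child. -/
def NonBlocking {D : Type} (T : Set (List D)) : Prop :=
  ∀ w ∈ T, ∃ d : D, w ++ [d] ∈ T

/-- `π` is an infinite path of `T` starting at node `w`. -/
def IsPathFrom {D : Type} (T : Set (List D)) (π : ℕ → List D) (w : List D) : Prop :=
  π 0 = w ∧ ∀ i, π i ∈ T ∧ ∃ d : D, π (i + 1) = π i ++ [d]

mutual
/-- Satisfaction of a CCTL* state formula at a node of the Kripke tree `(T, Lab)`. -/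
def SatS {D AP : Type} (T : Set (List D)) (Lab : List D → Set AP) :
    SForm AP → List D → Prop
  | .top, _ => True
  | .atom p, w => p ∈ Lab w
  | .not φ, w => ¬ SatS T Lab φ w
  | .and φ ψ, w => SatS T Lab φ w ∧ SatS T Lab ψ w
  | .ex ψ, w => ∃ π : ℕ → List D, IsPathFrom T π w ∧ SatP T Lab ψ π 0
  | .cnt k φ, w => ∃ s : Finset D, k ≤ s.card ∧
      ∀ d ∈ s, w ++ [d] ∈ T ∧ SatS T Lab φ (w ++ [d])
/-- Satisfaction of a CCTL* path formula at position `i` of the infinite path `π`. -/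
def SatP {D AP : Type} (T : Set (List D)) (Lab : List D → Set AP) :
    PForm AP → (ℕ → List D) → ℕ → Prop
  | .state φ, π, i => SatS T Lab φ (π i)
  | .not ψ, π, i => ¬ SatP T Lab ψ π i
  | .and ψ χ, π, i => SatP T Lab ψ π i ∧ SatP T Lab χ π i
  | .next ψ, π, i => SatP T Lab ψ π (i + 1)
  | .until_ ψ χ, π, i =>
      ∃ j, i ≤ j ∧ SatP T Lab χ π j ∧ ∀ k, i ≤ k → k < j → SatP T Lab ψ π k
end

mutual
/-- Length (number of symbols) of a CCTL* state formula. -/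
def sizeS {AP : Type} : SForm AP → ℕ
  | .top => 1
  | .atom _ => 1
  | .not φ => 1 + sizeS φ
  | .and φ ψ => 1 + sizeS φ + sizeS ψ
  | .ex ψ => 1 + sizeP ψ
  | .cnt _ φ => 1 + sizeS φ
/-- Length (number of symbols) of a CCTL* path formula. -/
def sizeP {AP : Type} : PForm AP → ℕ
  | .state φ => sizeS φ
  | .not ψ => 1 + sizeP ψ
  | .and ψ χ => 1 + sizeP ψ + sizeP χ
  | .next ψ => 1 + sizeP ψ
  | .until_ ψ χ => 1 + sizeP ψ + sizeP χ
end

mutual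
/-- CCTL* state formulas in simple form: every occurrence of the path
quantifier `E` is immediately preceded by the counting operator `D^1`. -/
inductive SimpleS {AP : Type} : SForm AP → Prop
  | top : SimpleS .top
  | atom (p : AP) : SimpleS (.atom p)
  | not {φ} : SimpleS φ → SimpleS (.not φ)
  | and {φ ψ} : SimpleS φ → SimpleS ψ → SimpleS (.and φ ψ)
  | cntE {ψ} : SimpleP ψ → SimpleS (.cnt 1 (.ex ψ))
  | cnt {n φ} : SimpleS φ → SimpleS (.cnt n φ)
/-- CCTL* path formulas in simple form. -/
inductive SimpleP {AP : Type} : PForm AP → Prop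
  | state {φ} : SimpleS φ → SimpleP (.state φ)
  | not {ψ} : SimpleP ψ → SimpleP (.not ψ)
  | and {ψ χ} : SimpleP ψ → SimpleP χ → SimpleP (.and ψ χ)
  | next {ψ} : SimpleP ψ → SimpleP (.next ψ)
  | until_ {ψ χ} : SimpleP ψ → SimpleP χ → SimpleP (.until_ ψ χ)
end

/-- Propositional state formulas. -/
inductive Prp {AP : Type} : SForm AP → Prop
  | top : Prp .top
  | atom (p : AP) : Prp (.atom p)
  | not {φ} : Prp φ → Prp (.not φ)
  | and {φ ψ} : Prp φ → Prp ψ → Prp (.and φ ψ)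

/-- Conjunction of a list of path formulas. -/
def pconj {AP : Type} : List (PForm AP) → PForm AP
  | [] => .state .top
  | ψ :: l => .and ψ (pconj l)

/-- Conjunction of a list of state formulas. -/
def sconj {AP : Type} : List (SForm AP) → SForm AP
  | [] => .top
  | φ :: l => .and φ (sconj l)

section Aux
variable {D AP : Type} (T : Set (List D)) (Lab : List D → Set AP)

theorem satP_shift :
    ∀ (ψ : PForm AP) (π : ℕ → List D) (i : ℕ),
      SatP T Lab ψ (fun j => π (j + 1)) i ↔ SatP T Lab ψ π (i + 1)
  | .state φ, π, i => by simp [SatP]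
  | .not ψ, π, i => by simp [SatP, satP_shift ψ π i]
  | .and ψ χ, π, i => by simp [SatP, satP_shift ψ π i, satP_shift χ π i]
  | .next ψ, π, i => by simp [SatP, satP_shift ψ π (i+1)]
  | .until_ ψ χ, π, i => by
      simp only [SatP]
      constructor
      · rintro ⟨j, hij, hχ, hψ⟩
        exact ⟨j+1, by omega, (satP_shift χ π j).1 hχ, fun k hk1 hk2 => by
          obtain ⟨k', rfl⟩ : ∃ k', k = k' + 1 := ⟨k-1, by omega⟩
          exact (satP_shift ψ π k').1 (hψ k' (by omega) (by omega))⟩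
      · rintro ⟨j, hij, hχ, hψ⟩
        obtain ⟨j', rfl⟩ : ∃ j', j = j' + 1 := ⟨j-1, by omega⟩
        exact ⟨j', by omega, (satP_shift χ π j').2 hχ, fun k hk1 hk2 =>
          (satP_shift ψ π k).2 (hψ (k+1) (by omega) (by omega))⟩

theorem satP_until (ψ χ : PForm AP) (π : ℕ → List D) (i : ℕ) :
    SatP T Lab (.until_ ψ χ) π i ↔
      SatP T Lab χ π i ∨ (SatP T Lab ψ π i ∧ SatP T Lab (.until_ ψ χ) π (i+1)) := by
  simp only [SatP]
  constructor
  · rintro ⟨j, hij, hχ, hψ⟩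
    rcases eq_or_lt_of_le hij with rfl | h
    · exact Or.inl hχ
    · exact Or.inr ⟨hψ i le_rfl h, j, by omega, hχ, fun k h1 h2 => hψ k (by omega) h2⟩
  · rintro (h | ⟨h1, j, hij, hχ, hψ⟩)
    · exact ⟨i, le_rfl, h, fun k h1 h2 => absurd h2 (by omega)⟩
    · refine ⟨j, by omega, hχ, fun k hk1 hk2 => ?_⟩
      rcases eq_or_lt_of_le hk1 with rfl | h
      · exact h1
      · exact hψ k (by omega) hk2

theorem satP_pconj : ∀ (l : List (PForm AP)) (π : ℕ → List D) (i : ℕ),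
    SatP T Lab (pconj l) π i ↔ ∀ ψ ∈ l, SatP T Lab ψ π i
  | [], π, i => by simp [pconj, SatP, SatS]
  | ψ :: l, π, i => by simp [pconj, SatP, satP_pconj l π i]

theorem satS_sconj : ∀ (l : List (SForm AP)) (w : List D),
    SatS T Lab (sconj l) w ↔ ∀ φ ∈ l, SatS T Lab φ w
  | [], w => by simp [sconj, SatS]
  | φ :: l, w => by simp [sconj, SatS, satS_sconj l w]

/-- Disjunction of two state formulas. -/
def sor (φ ψ : SForm AP) : SForm AP := .not ((SForm.not φ).and (.not ψ))

theorem satS_sor (φ ψ : SForm AP) (w : List D) :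
    SatS T Lab (sor φ ψ) w ↔ SatS T Lab φ w ∨ SatS T Lab ψ w := by
  simp [sor, SatS]; tauto

theorem simpleS_sor {φ ψ : SForm AP} (h1 : SimpleS φ) (h2 : SimpleS ψ) : SimpleS (sor φ ψ) :=
  .not (.and (.not h1) (.not h2))

/-- Disjunction of a list of state formulas. -/
def sdisj : List (SForm AP) → SForm AP
  | [] => .not .top
  | φ :: l => sor φ (sdisj l)

theorem satS_sdisj : ∀ (l : List (SForm AP)) (w : List D),
    SatS T Lab (sdisj l) w ↔ ∃ φ ∈ l, SatS T Lab φ w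
  | [], w => by simp [sdisj, SatS]
  | φ :: l, w => by simp [sdisj, satS_sor, satS_sdisj l w]

theorem simpleS_sdisj : ∀ {l : List (SForm AP)}, (∀ φ ∈ l, SimpleS φ) → SimpleS (sdisj l)
  | [], _ => .not .top
  | φ :: l, h => simpleS_sor (h φ (by simp)) (simpleS_sdisj fun ψ hψ => h ψ (by simp [hψ]))

theorem ex_next (w : List D) (hw : w ∈ T) (ξ : PForm AP) :
    (∃ π, IsPathFrom T π w ∧ SatP T Lab ξ π 1) ↔ SatS T Lab (.cnt 1 (.ex ξ)) w := by
  constructor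
  · rintro ⟨π, ⟨h0, hp⟩, hξ⟩
    obtain ⟨d, hd⟩ := (hp 0).2
    refine ⟨{d}, by simp, ?_⟩
    intro e he
    simp at he; subst he
    rw [← h0, ← hd]
    refine ⟨(hp 1).1, fun j => π (j + 1), ⟨rfl, fun i => ⟨(hp (i+1)).1, (hp (i+1)).2⟩⟩, ?_⟩
    exact (satP_shift T Lab ξ π 0).2 hξ
  · rintro ⟨s, hcard, hs⟩
    obtain ⟨d, hd⟩ := Finset.card_pos.mp hcard
    obtain ⟨hdT, π', ⟨h0', hp'⟩, hξ'⟩ := hs d hd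
    refine ⟨fun i => match i with | 0 => w | Nat.succ j => π' j, ⟨rfl, ?_⟩, ?_⟩
    · intro i
      match i with
      | 0 => exact ⟨hw, d, by simpa [h0'] ⟩
      | Nat.succ j => exact ⟨(hp' j).1, (hp' j).2⟩
    · exact (satP_shift T Lab ξ (fun i => match i with | 0 => w | Nat.succ j => π' j) 0).mp hξ'

end Aux
/-- Negation of a "disjunction of (state ∧ X path)" normal form. -/
def negSplit {AP : Type} : List (SForm AP × PForm AP) → List (SForm AP × PForm AP)
  | [] => [(.top, .state .top)]
  | (σ, ξ) :: L => (negSplit L).flatMap fun q =>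
      [(σ.and q.1, (PForm.not ξ).and q.2), ((SForm.not σ).and q.1, q.2)]

/-- Splitting a path formula into a disjunction of (state now ∧ X rest). -/
def split {AP : Type} : PForm AP → List (SForm AP × PForm AP)
  | .state φ => [(φ, .state .top)]
  | .not ψ => negSplit (split ψ)
  | .and ψ χ => (split ψ).flatMap fun p => (split χ).map fun q => (p.1.and q.1, p.2.and q.2)
  | .next ψ => [(.top, ψ)]
  | .until_ ψ χ => split χ ++ (split ψ).map fun p => (p.1, p.2.and (ψ.until_ χ))

section Aux2
variable {D AP : Type} (T : Set (List D)) (Lab : List D → Set AP)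

theorem negSplit_correct : ∀ (L : List (SForm AP × PForm AP)) (π : ℕ → List D) (i : ℕ),
    (∃ q ∈ negSplit L, SatS T Lab q.1 (π i) ∧ SatP T Lab q.2 π (i+1)) ↔
      ¬ ∃ p ∈ L, SatS T Lab p.1 (π i) ∧ SatP T Lab p.2 π (i+1)
  | [], π, i => by simp [negSplit, SatS, SatP]
  | (σ, ξ) :: L, π, i => by
      have IH := negSplit_correct L π i
      simp only [negSplit, List.mem_flatMap, List.mem_cons, List.not_mem_nil, or_false,
        List.mem_singleton, SatS, SatP] at *
      constructor
      · rintro ⟨q, ⟨r, hr, (rfl | rfl)⟩, h1, h2⟩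
        · rintro ⟨p, (rfl | hp), hp1, hp2⟩
          · exact h2.1 hp2
          · exact IH.1 ⟨r, hr, h1.2, h2.2⟩ ⟨p, hp, hp1, hp2⟩
        · rintro ⟨p, (rfl | hp), hp1, hp2⟩
          · exact h1.1 hp1
          · exact IH.1 ⟨r, hr, h1.2, h2⟩ ⟨p, hp, hp1, hp2⟩
      · intro h
        have hL : ¬ ∃ p ∈ L, SatS T Lab p.1 (π i) ∧ SatP T Lab p.2 π (i+1) := by
          rintro ⟨p, hp, h1, h2⟩; exact h ⟨p, Or.inr hp, h1, h2⟩
        obtain ⟨r, hr, hr1, hr2⟩ := IH.2 hL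
        by_cases hσ : SatS T Lab σ (π i)
        · have hξ : ¬ SatP T Lab ξ π (i+1) := fun hξ => h ⟨(σ, ξ), Or.inl rfl, hσ, hξ⟩
          exact ⟨_, ⟨r, hr, Or.inl rfl⟩, ⟨hσ, hr1⟩, hξ, hr2⟩
        · exact ⟨_, ⟨r, hr, Or.inr rfl⟩, ⟨hσ, hr1⟩, hr2⟩

theorem split_correct : ∀ (ψ : PForm AP) (π : ℕ → List D) (i : ℕ),
    SatP T Lab ψ π i ↔
      ∃ p ∈ split ψ, SatS T Lab p.1 (π i) ∧ SatP T Lab p.2 π (i+1)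
  | .state φ, π, i => by simp [split, SatP, SatS]
  | .not ψ, π, i => by
      rw [show split (.not ψ) = negSplit (split ψ) from rfl]
      rw [negSplit_correct T Lab (split ψ) π i]
      simp only [SatP]
      rw [split_correct ψ π i]
  | .and ψ χ, π, i => by
      simp only [SatP, split_correct ψ π i, split_correct χ π i]
      simp only [split, List.mem_flatMap, List.mem_map, SatS, SatP]
      constructor
      · rintro ⟨⟨p, hp, hp1, hp2⟩, ⟨q, hq, hq1, hq2⟩⟩
        exact ⟨_, ⟨p, hp, q, hq, rfl⟩, ⟨hp1, hq1⟩, hp2, hq2⟩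
      · rintro ⟨_, ⟨p, hp, q, hq, rfl⟩, ⟨hp1, hq1⟩, hp2, hq2⟩
        exact ⟨⟨p, hp, hp1, hp2⟩, ⟨q, hq, hq1, hq2⟩⟩
  | .next ψ, π, i => by simp [split, SatP, SatS]
  | .until_ ψ χ, π, i => by
      rw [satP_until T Lab ψ χ π i]
      simp only [split_correct ψ π i, split_correct χ π i]
      simp only [split, List.mem_append, List.mem_map, SatS, SatP]
      constructor
      · rintro (⟨p, hp, h1, h2⟩ | ⟨⟨p, hp, h1, h2⟩, hU⟩)
        · exact ⟨p, Or.inl hp, h1, h2⟩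
        · exact ⟨_, Or.inr ⟨p, hp, rfl⟩, h1, h2, hU⟩
      · rintro ⟨p, hp | ⟨q, hq, rfl⟩, h1, h2⟩
        · exact Or.inl ⟨p, hp, h1, h2⟩
        · exact Or.inr ⟨⟨q, hq, h1, h2.1⟩, h2.2⟩

theorem negSplit_simple : ∀ (L : List (SForm AP × PForm AP)),
    (∀ p ∈ L, SimpleS p.1 ∧ SimpleP p.2) →
    ∀ q ∈ negSplit L, SimpleS q.1 ∧ SimpleP q.2
  | [], _, q, hq => by
      simp [negSplit] at hq; subst hq; exact ⟨.top, .state .top⟩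
  | (σ, ξ) :: L, h, q, hq => by
      have hσ : SimpleS σ ∧ SimpleP ξ := h (σ, ξ) List.mem_cons_self
      have hL := negSplit_simple L (fun p hp => h p (by simp [hp]))
      simp only [negSplit, List.mem_flatMap, List.mem_cons, List.not_mem_nil, or_false,
        List.mem_singleton] at hq
      obtain ⟨r, hr, (rfl | rfl)⟩ := hq
      · exact ⟨.and hσ.1 (hL r hr).1, .and (.not hσ.2) (hL r hr).2⟩
      · exact ⟨.and (.not hσ.1) (hL r hr).1, (hL r hr).2⟩

theorem split_simple : ∀ (ψ : PForm AP), SimpleP ψ →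
    ∀ p ∈ split ψ, SimpleS p.1 ∧ SimpleP p.2
  | .state φ, h, p, hp => by
      cases h with
      | state hφ => simp [split] at hp; subst hp; exact ⟨hφ, .state .top⟩
  | .not ψ, h, p, hp => by
      cases h with
      | not hψ => exact negSplit_simple _ (split_simple ψ hψ) p hp
  | .and ψ χ, h, p, hp => by
      cases h with
      | and hψ hχ =>
        simp only [split, List.mem_flatMap, List.mem_map] at hp
        obtain ⟨a, ha, b, hb, rfl⟩ := hp
        exact ⟨.and (split_simple ψ hψ a ha).1 (split_simple χ hχ b hb).1,
          .and (split_simple ψ hψ a ha).2 (split_simple χ hχ b hb).2⟩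
  | .next ψ, h, p, hp => by
      cases h with
      | next hψ => simp [split] at hp; subst hp; exact ⟨.top, hψ⟩
  | .until_ ψ χ, h, p, hp => by
      cases h with
      | until_ hψ hχ =>
        simp only [split, List.mem_append, List.mem_map] at hp
        rcases hp with hp | ⟨a, ha, rfl⟩
        · exact split_simple χ hχ p hp
        · exact ⟨(split_simple ψ hψ a ha).1, .and (split_simple ψ hψ a ha).2 (.until_ hψ hχ)⟩

theorem satS_ex_iff (w : List D) (hw : w ∈ T) (ψ : PForm AP) :
    SatS T Lab (.ex ψ) w ↔
      SatS T Lab (sdisj ((split ψ).map fun p => p.1.and (.cnt 1 (.ex p.2)))) w := by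
  rw [satS_sdisj]
  simp only [List.mem_map]
  constructor
  · rintro ⟨π, hπ, hψ⟩
    obtain ⟨p, hp, h1, h2⟩ := (split_correct T Lab ψ π 0).1 hψ
    rw [hπ.1] at h1
    refine ⟨_, ⟨p, hp, rfl⟩, h1, ?_⟩
    exact (ex_next T Lab w hw p.2).1 ⟨π, hπ, h2⟩
  · rintro ⟨_, ⟨p, hp, rfl⟩, h1, h2⟩
    obtain ⟨π, hπ, hξ⟩ := (ex_next T Lab w hw p.2).2 h2
    refine ⟨π, hπ, (split_correct T Lab ψ π 0).2 ⟨p, hp, ?_, hξ⟩⟩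
    rw [hπ.1]; exact h1

end Aux2
mutual
theorem partS {AP : Type} : ∀ (φ : SForm AP), ∃ φ' : SForm AP, SimpleS φ' ∧
    ∀ (D : Type) (T : Set (List D)) (Lab : List D → Set AP) (w : List D), w ∈ T →
      (SatS T Lab φ w ↔ SatS T Lab φ' w)
  | .top => ⟨.top, .top, fun _ _ _ _ _ => Iff.rfl⟩
  | .atom p => ⟨.atom p, .atom p, fun _ _ _ _ _ => Iff.rfl⟩
  | .not φ => by
      obtain ⟨φ', hs, he⟩ := partS φ
      exact ⟨.not φ', .not hs, fun D T Lab w hw => by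
        simp only [SatS]; rw [he D T Lab w hw]⟩
  | .and φ ψ => by
      obtain ⟨φ', hs, he⟩ := partS φ
      obtain ⟨ψ', hs', he'⟩ := partS ψ
      exact ⟨.and φ' ψ', .and hs hs', fun D T Lab w hw => by
        simp only [SatS]; rw [he D T Lab w hw, he' D T Lab w hw]⟩
  | .cnt k φ => by
      obtain ⟨φ', hs, he⟩ := partS φ
      refine ⟨.cnt k φ', .cnt hs, fun D T Lab w hw => ?_⟩
      simp only [SatS]
      constructor
      · rintro ⟨s, hc, hall⟩
        exact ⟨s, hc, fun d hd =>
          ⟨(hall d hd).1, (he D T Lab _ (hall d hd).1).1 (hall d hd).2⟩⟩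
      · rintro ⟨s, hc, hall⟩
        exact ⟨s, hc, fun d hd =>
          ⟨(hall d hd).1, (he D T Lab _ (hall d hd).1).2 (hall d hd).2⟩⟩
  | .ex ψ => by
      obtain ⟨ψ', hs, he⟩ := partP ψ
      refine ⟨sdisj ((split ψ').map fun p => p.1.and (.cnt 1 (.ex p.2))), ?_, ?_⟩
      · apply simpleS_sdisj
        intro φ hφ
        simp only [List.mem_map] at hφ
        obtain ⟨p, hp, rfl⟩ := hφ
        exact .and (split_simple ψ' hs p hp).1 (.cntE (split_simple ψ' hs p hp).2)
      · intro D T Lab w hw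
        rw [← satS_ex_iff T Lab w hw ψ']
        simp only [SatS]
        constructor
        · rintro ⟨π, hπ, h⟩; exact ⟨π, hπ, (he D T Lab π w hπ 0).1 h⟩
        · rintro ⟨π, hπ, h⟩; exact ⟨π, hπ, (he D T Lab π w hπ 0).2 h⟩

theorem partP {AP : Type} : ∀ (ψ : PForm AP), ∃ ψ' : PForm AP, SimpleP ψ' ∧
    ∀ (D : Type) (T : Set (List D)) (Lab : List D → Set AP) (π : ℕ → List D) (w : List D),
      IsPathFrom T π w → ∀ i, (SatP T Lab ψ π i ↔ SatP T Lab ψ' π i)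
  | .state φ => by
      obtain ⟨φ', hs, he⟩ := partS φ
      exact ⟨.state φ', .state hs, fun D T Lab π w hπ i => by
        simp only [SatP]; rw [he D T Lab (π i) (hπ.2 i).1]⟩
  | .not ψ => by
      obtain ⟨ψ', hs, he⟩ := partP ψ
      exact ⟨.not ψ', .not hs, fun D T Lab π w hπ i => by
        simp only [SatP]; rw [he D T Lab π w hπ i]⟩
  | .and ψ χ => by
      obtain ⟨ψ', hs, he⟩ := partP ψ
      obtain ⟨χ', hs', he'⟩ := partP χ
      exact ⟨.and ψ' χ', .and hs hs', fun D T Lab π w hπ i => by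
        simp only [SatP]; rw [he D T Lab π w hπ i, he' D T Lab π w hπ i]⟩
  | .next ψ => by
      obtain ⟨ψ', hs, he⟩ := partP ψ
      exact ⟨.next ψ', .next hs, fun D T Lab π w hπ i => by
        simp only [SatP]; rw [he D T Lab π w hπ (i+1)]⟩
  | .until_ ψ χ => by
      obtain ⟨ψ', hs, he⟩ := partP ψ
      obtain ⟨χ', hs', he'⟩ := partP χ
      refine ⟨.until_ ψ' χ', .until_ hs hs', fun D T Lab π w hπ i => ?_⟩
      simp only [SatP]
      constructor
      · rintro ⟨j, hij, hχ, hψ⟩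
        exact ⟨j, hij, (he' D T Lab π w hπ j).1 hχ,
          fun k h1 h2 => (he D T Lab π w hπ k).1 (hψ k h1 h2)⟩
      · rintro ⟨j, hij, hχ, hψ⟩
        exact ⟨j, hij, (he' D T Lab π w hπ j).2 hχ,
          fun k h1 h2 => (he D T Lab π w hπ k).2 (hψ k h1 h2)⟩
end
/-- (a) Every CCTL* state formula is equivalent (over all nonblocking Kripke
trees) to one in simple form.  (b) The key equivalence: for counting formulas
`D^{m_j} φ_j` (given by `A`), negated counting formulas `¬D^{n_j} θ_j` (given
by `B`), next-formulas `X ξ_j` (given by `Ξ`), and a propositional `χ`,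
`E(⋀_j D^{m_j}φ_j ∧ ⋀_j ¬D^{n_j}θ_j ∧ ⋀_j X ξ_j ∧ χ)` is equivalent to
`⋀_j D^{m_j}φ_j ∧ ⋀_j ¬D^{n_j}θ_j ∧ D^1 E(⋀_j ξ_j) ∧ χ`. -/
theorem stmt16 (AP : Type) :
    (∀ φ : SForm AP, ∃ φ' : SForm AP, SimpleS φ' ∧
      ∀ (D : Type) (T : Set (List D)) (Lab : List D → Set AP),
        IsTree T → NonBlocking T → ∀ w ∈ T,
          (SatS T Lab φ w ↔ SatS T Lab φ' w)) ∧
    (∀ (A B : List (ℕ × SForm AP)) (Ξ : List (PForm AP)) (χ : SForm AP),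
      Prp χ →
      ∀ (D : Type) (T : Set (List D)) (Lab : List D → Set AP),
        IsTree T → NonBlocking T → ∀ w ∈ T,
        (SatS T Lab
          (.ex (pconj ((A.map fun a => PForm.state (.cnt a.1 a.2)) ++
                       (B.map fun b => PForm.state (.not (.cnt b.1 b.2))) ++
                       (Ξ.map PForm.next) ++ [PForm.state χ]))) w
          ↔
        SatS T Lab
          (sconj ((A.map fun a => SForm.cnt a.1 a.2) ++
                  (B.map fun b => SForm.not (.cnt b.1 b.2)) ++
                  [SForm.cnt 1 (.ex (pconj Ξ)), χ])) w)) := by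
  constructor
  · intro φ
    obtain ⟨φ', hs, he⟩ := partS φ
    exact ⟨φ', hs, fun D T Lab _ _ w hw => he D T Lab w hw⟩
  · intro A B Ξ χ _ D T Lab _ _ w hw
    have hpc : ∀ π : ℕ → List D,
        SatP T Lab (pconj ((A.map fun a => PForm.state (.cnt a.1 a.2)) ++
                       (B.map fun b => PForm.state (.not (.cnt b.1 b.2))) ++
                       (Ξ.map PForm.next) ++ [PForm.state χ])) π 0 ↔
        ((∀ a ∈ A, SatS T Lab (.cnt a.1 a.2) (π 0)) ∧
         (∀ b ∈ B, ¬ SatS T Lab (.cnt b.1 b.2) (π 0)) ∧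
         (∀ ξ ∈ Ξ, SatP T Lab ξ π 1) ∧ SatS T Lab χ (π 0)) := by
      intro π
      rw [satP_pconj]
      constructor
      · intro h
        refine ⟨fun a ha => ?_, fun b hb => ?_, fun ξ hξ => ?_, ?_⟩
        · simpa [SatP] using h _ (List.mem_append_left _ (List.mem_append_left _
            (List.mem_append_left _ (List.mem_map_of_mem ha))))
        · simpa [SatP, SatS] using h _ (List.mem_append_left _ (List.mem_append_left _
            (List.mem_append_right _ (List.mem_map_of_mem hb))))
        · simpa [SatP] using h _ (List.mem_append_left _
            (List.mem_append_right _ (List.mem_map_of_mem (f := PForm.next) hξ)))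
        · simpa [SatP] using h _ (List.mem_append_right _ (List.mem_singleton_self _))
      · rintro ⟨h1, h2, h3, h4⟩ ψ hψ
        rcases List.mem_append.1 hψ with h' | h'
        · rcases List.mem_append.1 h' with h'' | h''
          · rcases List.mem_append.1 h'' with h3' | h3'
            · obtain ⟨a, ha, rfl⟩ := List.mem_map.1 h3'
              simpa [SatP] using h1 a ha
            · obtain ⟨b, hb, rfl⟩ := List.mem_map.1 h3'
              simpa [SatP, SatS] using h2 b hb
          · obtain ⟨ξ, hξ, rfl⟩ := List.mem_map.1 h''
            simpa [SatP] using h3 ξ hξ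
        · rw [List.mem_singleton.1 h']
          simpa [SatP] using h4
    have hsc : SatS T Lab (sconj ((A.map fun a => SForm.cnt a.1 a.2) ++
                  (B.map fun b => SForm.not (.cnt b.1 b.2)) ++
                  [SForm.cnt 1 (.ex (pconj Ξ)), χ])) w ↔
        ((∀ a ∈ A, SatS T Lab (.cnt a.1 a.2) w) ∧
         (∀ b ∈ B, ¬ SatS T Lab (.cnt b.1 b.2) w) ∧
         SatS T Lab (.cnt 1 (.ex (pconj Ξ))) w ∧ SatS T Lab χ w) := by
      rw [satS_sconj]
      constructor
      · intro h
        refine ⟨fun a ha => ?_, fun b hb => ?_, ?_, ?_⟩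
        · exact h _ (List.mem_append_left _ (List.mem_append_left _
            (List.mem_map_of_mem ha)))
        · simpa [SatS] using h _ (List.mem_append_left _ (List.mem_append_right _
            (List.mem_map_of_mem hb)))
        · exact h _ (List.mem_append_right _ (by simp))
        · exact h _ (List.mem_append_right _ (by simp))
      · rintro ⟨h1, h2, h3, h4⟩ φ hφ
        rcases List.mem_append.1 hφ with h' | h'
        · rcases List.mem_append.1 h' with h'' | h''
          · obtain ⟨a, ha, rfl⟩ := List.mem_map.1 h''
            exact h1 a ha
          · obtain ⟨b, hb, rfl⟩ := List.mem_map.1 h''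
            simpa [SatS] using h2 b hb
        · rcases List.mem_cons.1 h' with rfl | h''
          · exact h3
          · rw [List.mem_singleton.1 h'']
            exact h4
    rw [hsc]
    simp only [SatS]
    constructor
    · rintro ⟨π, hπ, h⟩
      rw [hpc] at h
      rw [hπ.1] at h
      exact ⟨h.1, h.2.1,
        (ex_next T Lab w hw (pconj Ξ)).1 ⟨π, hπ, (satP_pconj T Lab Ξ π 1).2 h.2.2.1⟩,
        h.2.2.2⟩
    · rintro ⟨h1, h2, h3, h4⟩
      obtain ⟨π, hπ, hΞ⟩ := (ex_next T Lab w hw (pconj Ξ)).2 h3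
      refine ⟨π, hπ, (hpc π).2 ?_⟩
      rw [hπ.1]
      exact ⟨h1, h2, (satP_pconj T Lab Ξ π 1).1 hΞ, h4⟩
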